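/- There exists a constant C > 0, depending only on ψ, ν₁ and ν₂, such that for all ε ∈ (0, 1/2) and all T > 10, vol(E⁺_{T,ε}) ≤ (1+ε)² · vol(E_T) + C and vol(E⁻_{T,ε}) ≥ (1+ε)^{-2} · vol(E_T) − C. -/

import Mathlib

open MeasureTheory Set Filter

/-- The set `E_T` from the paper, as a subset of `ℝ^m × ℝ^n`. -/
def ESet (m n : ℕ) (ψ : ℝ → ℝ) (ν₁ : (Fin m → ℝ) → ℝ) (ν₂ : (Fin n → ℝ) → ℝ)
    (T : ℝ) : Set ((Fin m → ℝ) × (Fin n → ℝ)) :=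
  {p | ν₁ p.1 ^ m < ψ (ν₂ p.2 ^ n) ∧ 1 ≤ ν₂ p.2 ^ n ∧ ν₂ p.2 ^ n < T}

/-- The set `E⁻_{T,ε}` from the paper, as a subset of `ℝ^m × ℝ^n`. -/
def Eminus (m n : ℕ) (ψ : ℝ → ℝ) (ν₁ : (Fin m → ℝ) → ℝ) (ν₂ : (Fin n → ℝ) → ℝ)
    (ε T : ℝ) : Set ((Fin m → ℝ) × (Fin n → ℝ)) :=
  {p | ν₁ p.1 ^ m < (1 + ε)⁻¹ * ψ ((1 + ε) * ν₂ p.2 ^ n)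
    ∧ 3/2 ≤ ν₂ p.2 ^ n ∧ ν₂ p.2 ^ n < (1 + ε)⁻¹ * T}

/-- The set `E'_{T,ε}` from the paper. -/
def Eprime (m n : ℕ) (ψ : ℝ → ℝ) (ν₁ : (Fin m → ℝ) → ℝ) (ν₂ : (Fin n → ℝ) → ℝ)
    (ε T : ℝ) : Set ((Fin m → ℝ) × (Fin n → ℝ)) :=
  {p | ν₁ p.1 ^ m < (1 + ε) * ψ ((1 + ε)⁻¹ * ν₂ p.2 ^ n)
    ∧ 3/2 ≤ ν₂ p.2 ^ n ∧ ν₂ p.2 ^ n < (1 + ε) * T}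

/-- The set `C₀` from the paper. -/
def Czero (m n : ℕ) (ψ : ℝ → ℝ) (ν₁ : (Fin m → ℝ) → ℝ) (ν₂ : (Fin n → ℝ) → ℝ) :
    Set ((Fin m → ℝ) × (Fin n → ℝ)) :=
  {p | ν₁ p.1 ^ m < 2 * ψ 1 ∧ 1/2 < ν₂ p.2 ^ n ∧ ν₂ p.2 ^ n ≤ 3/2}

/-- The set `E⁺_{T,ε} = E'_{T,ε} ∪ C₀` from the paper. -/
def Eplus (m n : ℕ) (ψ : ℝ → ℝ) (ν₁ : (Fin m → ℝ) → ℝ) (ν₂ : (Fin n → ℝ) → ℝ)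
    (ε T : ℝ) : Set ((Fin m → ℝ) × (Fin n → ℝ)) :=
  Eprime m n ψ ν₁ ν₂ ε T ∪ Czero m n ψ ν₁ ν₂




section NuLemmas
variable {k : ℕ} {ν : (Fin k → ℝ) → ℝ}

lemma nu_zero (hsmul : ∀ (c : ℝ) x, ν (c • x) = |c| * ν x) : ν 0 = 0 := by
  have := hsmul 0 0; simpa using this

lemma nu_neg (hsmul : ∀ (c : ℝ) x, ν (c • x) = |c| * ν x) (x : Fin k → ℝ) : ν (-x) = ν x := by
  have := hsmul (-1) x; simpa using this

lemma nu_nonneg (hadd : ∀ x y, ν (x + y) ≤ ν x + ν y)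
    (hsmul : ∀ (c : ℝ) x, ν (c • x) = |c| * ν x) (x : Fin k → ℝ) : 0 ≤ ν x := by
  have h := hadd x (-x)
  rw [add_neg_cancel, nu_zero hsmul, nu_neg hsmul] at h
  linarith

lemma nu_sum_le (hadd : ∀ x y, ν (x + y) ≤ ν x + ν y)
    (hsmul : ∀ (c : ℝ) x, ν (c • x) = |c| * ν x)
    (s : Finset (Fin k)) (g : Fin k → (Fin k → ℝ)) :
    ν (∑ i ∈ s, g i) ≤ ∑ i ∈ s, ν (g i) := by
  induction s using Finset.cons_induction with
  | empty => simp [nu_zero hsmul]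
  | cons i s hi ih =>
    rw [Finset.sum_cons, Finset.sum_cons]
    exact le_trans (hadd _ _) (by linarith)

lemma nu_le_norm (hadd : ∀ x y, ν (x + y) ≤ ν x + ν y)
    (hsmul : ∀ (c : ℝ) x, ν (c • x) = |c| * ν x) (x : Fin k → ℝ) :
    ν x ≤ (∑ i, ν ((Pi.single i 1 : Fin k → ℝ))) * ‖x‖ := by
  have hx : x = ∑ i, x i • (Pi.single i 1 : Fin k → ℝ) := by
    ext j
    simp [Pi.single_apply]
  calc ν x = ν (∑ i, x i • (Pi.single i 1 : Fin k → ℝ)) := by rw [← hx]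
    _ ≤ ∑ i, ν (x i • (Pi.single i 1 : Fin k → ℝ)) := nu_sum_le hadd hsmul _ _
    _ = ∑ i, |x i| * ν ((Pi.single i 1 : Fin k → ℝ)) := by simp [hsmul]
    _ ≤ ∑ i, ‖x‖ * ν ((Pi.single i 1 : Fin k → ℝ)) := by
        refine Finset.sum_le_sum fun i _ => ?_
        exact mul_le_mul_of_nonneg_right (by simpa using norm_le_pi_norm x i)
          (nu_nonneg hadd hsmul _)
    _ = (∑ i, ν ((Pi.single i 1 : Fin k → ℝ))) * ‖x‖ := by rw [Finset.sum_mul]; exact Finset.sum_congr rfl fun i _ => mul_comm _ _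

lemma nu_continuous (hadd : ∀ x y, ν (x + y) ≤ ν x + ν y)
    (hsmul : ∀ (c : ℝ) x, ν (c • x) = |c| * ν x) : Continuous ν := by
  set K := ∑ i, ν (Pi.single i 1 : Fin k → ℝ) with hK
  have hK0 : 0 ≤ K := Finset.sum_nonneg fun i _ => nu_nonneg hadd hsmul _
  have hlip : LipschitzWith (Real.toNNReal K) ν := by
    refine LipschitzWith.of_dist_le_mul fun x y => ?_
    rw [Real.dist_eq, dist_eq_norm, Real.coe_toNNReal _ hK0]
    have h1 : ν x - ν y ≤ ν (x - y) := by
      have := hadd (x - y) y; rw [sub_add_cancel] at this; linarith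
    have h2 : ν y - ν x ≤ ν (x - y) := by
      have := hadd (y - x) x; rw [sub_add_cancel] at this
      have := nu_neg hsmul (x - y); rw [neg_sub] at this; linarith
    have h3 := nu_le_norm hadd hsmul (x - y)
    rw [abs_sub_le_iff]
    constructor <;> linarith
  exact hlip.continuous

lemma nu_lower (hk : 1 ≤ k) (hadd : ∀ x y, ν (x + y) ≤ ν x + ν y)
    (hsmul : ∀ (c : ℝ) x, ν (c • x) = |c| * ν x)
    (hdef : ∀ x, ν x = 0 ↔ x = 0) :
    ∃ c : ℝ, 0 < c ∧ ∀ x, c * ‖x‖ ≤ ν x := by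
  haveI : Nonempty (Fin k) := ⟨⟨0, hk⟩⟩
  have hcs : IsCompact (Metric.sphere (0 : Fin k → ℝ) 1) := isCompact_sphere 0 1
  have hne : (Metric.sphere (0 : Fin k → ℝ) 1).Nonempty :=
    NormedSpace.sphere_nonempty.mpr zero_le_one
  obtain ⟨x₀, hx₀, hmin⟩ := hcs.exists_isMinOn hne (nu_continuous hadd hsmul).continuousOn
  have hx₀n : ‖x₀‖ = 1 := by simpa using hx₀
  have hx₀ne : x₀ ≠ 0 := by intro h; rw [h] at hx₀n; simp at hx₀n
  have hpos : 0 < ν x₀ :=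
    lt_of_le_of_ne (nu_nonneg hadd hsmul _) (fun h => hx₀ne ((hdef x₀).mp h.symm))
  refine ⟨ν x₀, hpos, fun x => ?_⟩
  rcases eq_or_ne x 0 with rfl | hx
  · simp [nu_zero hsmul]
  · have hxn : (0:ℝ) < ‖x‖ := norm_pos_iff.mpr hx
    have hmem : ‖x‖⁻¹ • x ∈ Metric.sphere (0 : Fin k → ℝ) 1 := by
      simp [norm_smul, abs_of_pos (inv_pos.mpr hxn), inv_mul_cancel₀ hxn.ne']
    have heq : ν x = ‖x‖ * ν (‖x‖⁻¹ • x) := by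
      rw [hsmul, abs_of_pos (inv_pos.mpr hxn)]
      field_simp
    have := hmin hmem
    have h2 : ν x₀ ≤ ν (‖x‖⁻¹ • x) := this
    nlinarith

end NuLemmas

section Aux

instance volumeProdIsAddHaar (m n : ℕ) :
    (volume : Measure ((Fin m → ℝ) × (Fin n → ℝ))).IsAddHaarMeasure :=
  Measure.prod.instIsAddHaarMeasure volume volume

lemma det_prodMap_pi {m n : ℕ} (f : (Fin m → ℝ) →ₗ[ℝ] (Fin m → ℝ))
    (g : (Fin n → ℝ) →ₗ[ℝ] (Fin n → ℝ)) :
    LinearMap.det (f.prodMap g) = f.det * g.det := by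
  let b₁ := Pi.basisFun ℝ (Fin m); let b₂ := Pi.basisFun ℝ (Fin n)
  rw [← LinearMap.det_toMatrix (b₁.prod b₂), LinearMap.toMatrix_prodMap b₁ b₂ f g,
    Matrix.det_fromBlocks_zero₂₁, LinearMap.det_toMatrix, LinearMap.det_toMatrix]

lemma det_smul_id_pi {m : ℕ} (a : ℝ) :
    LinearMap.det (a • (LinearMap.id : (Fin m → ℝ) →ₗ[ℝ] (Fin m → ℝ))) = a ^ m := by
  rw [LinearMap.det_smul, LinearMap.det_id, mul_one, Module.finrank_pi, Fintype.card_fin]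

end Aux

set_option maxHeartbeats 1000000 in
theorem volume_Eplus_Eminus_vs_ET (m n : ℕ) (hm : 1 ≤ m) (hn : 1 ≤ n)
    (ψ : ℝ → ℝ)
    (hψpos : ∀ t : ℝ, 1 ≤ t → 0 < ψ t)
    (hψcont : ContinuousOn ψ (Set.Ici 1))
    (hψanti : AntitoneOn ψ (Set.Ici 1))
    (ν₁ : (Fin m → ℝ) → ℝ)
    (hν₁add : ∀ x y, ν₁ (x + y) ≤ ν₁ x + ν₁ y)
    (hν₁smul : ∀ (c : ℝ) x, ν₁ (c • x) = |c| * ν₁ x)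
    (hν₁def : ∀ x, ν₁ x = 0 ↔ x = 0)
    (ν₂ : (Fin n → ℝ) → ℝ)
    (hν₂add : ∀ x y, ν₂ (x + y) ≤ ν₂ x + ν₂ y)
    (hν₂smul : ∀ (c : ℝ) x, ν₂ (c • x) = |c| * ν₂ x)
    (hν₂def : ∀ x, ν₂ x = 0 ↔ x = 0) :
    ∃ C : ℝ, 0 < C ∧ ∀ ε : ℝ, 0 < ε → ε < 1/2 → ∀ T : ℝ, 10 < T →
      (volume (Eplus m n ψ ν₁ ν₂ ε T)).toReal
        ≤ (1 + ε) ^ 2 * (volume (ESet m n ψ ν₁ ν₂ T)).toReal + C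
      ∧
      ((1 + ε) ^ 2)⁻¹ * (volume (ESet m n ψ ν₁ ν₂ T)).toReal - C
        ≤ (volume (Eminus m n ψ ν₁ ν₂ ε T)).toReal := by
  obtain ⟨c₁, hc₁, hlow₁⟩ := nu_lower hm hν₁add hν₁smul hν₁def
  obtain ⟨c₂, hc₂, hlow₂⟩ := nu_lower hn hν₂add hν₂smul hν₂def
  have hψ1 : 0 < ψ 1 := hψpos 1 le_rfl
  have hψle : ∀ t : ℝ, 1 ≤ t → ψ t ≤ ψ 1 := fun t ht =>
    hψanti (Set.self_mem_Ici) ht ht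
  -- finiteness of "boxes"
  have finbox : ∀ r s : ℝ,
      volume {p : (Fin m → ℝ) × (Fin n → ℝ) | ν₁ p.1 ^ m < r ∧ ν₂ p.2 ^ n < s} < ⊤ := by
    intro r s
    set R : ℝ := max 1 r / c₁ + max 1 s / c₂ with hR
    have hR₁ : (0:ℝ) < max 1 r / c₁ := div_pos (lt_of_lt_of_le one_pos (le_max_left _ _)) hc₁
    have hR₂ : (0:ℝ) < max 1 s / c₂ := div_pos (lt_of_lt_of_le one_pos (le_max_left _ _)) hc₂
    have hsub : {p : (Fin m → ℝ) × (Fin n → ℝ) | ν₁ p.1 ^ m < r ∧ ν₂ p.2 ^ n < s}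
        ⊆ Metric.ball 0 R := by
      rintro ⟨x, y⟩ ⟨h1, h2⟩
      have hx1 : ν₁ x < max 1 r := by
        by_contra hcon; push_neg at hcon
        have h1' : (1:ℝ) ≤ ν₁ x := le_trans (le_max_left _ _) hcon
        have h2' := le_self_pow₀ h1' (by omega : m ≠ 0)
        have := le_trans (le_trans (le_max_right 1 r) hcon) h2'
        linarith
      have hy1 : ν₂ y < max 1 s := by
        by_contra hcon; push_neg at hcon
        have h1' : (1:ℝ) ≤ ν₂ y := le_trans (le_max_left _ _) hcon
        have h2' := le_self_pow₀ h1' (by omega : n ≠ 0)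
        have := le_trans (le_trans (le_max_right 1 s) hcon) h2'
        linarith
      have hxn : ‖x‖ < max 1 r / c₁ := by
        rw [lt_div_iff₀ hc₁]
        calc ‖x‖ * c₁ = c₁ * ‖x‖ := mul_comm _ _
          _ ≤ ν₁ x := hlow₁ x
          _ < max 1 r := hx1
      have hyn : ‖y‖ < max 1 s / c₂ := by
        rw [lt_div_iff₀ hc₂]
        calc ‖y‖ * c₂ = c₂ * ‖y‖ := mul_comm _ _
          _ ≤ ν₂ y := hlow₂ y
          _ < max 1 s := hy1
      rw [mem_ball_zero_iff, Prod.norm_def]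
      exact max_lt (by simpa using lt_of_lt_of_le hxn (by linarith))
        (by simpa using lt_of_lt_of_le hyn (by linarith))
    exact lt_of_le_of_lt (measure_mono hsub) measure_ball_lt_top
  set D : Set ((Fin m → ℝ) × (Fin n → ℝ)) :=
    {p | ν₁ p.1 ^ m < 2 * ψ 1 + 1 ∧ ν₂ p.2 ^ n < 9/4} with hD
  have hDfin : volume D < ⊤ := finbox (2 * ψ 1 + 1) (9/4)
  set C : ℝ := (volume D).toReal + 1 with hC
  have hC0 : 0 < C := by positivity
  refine ⟨C, hC0, ?_⟩
  intro ε hε0 hε T hT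
  have hε1 : (0:ℝ) < 1 + ε := by linarith
  have hainv : (0:ℝ) < (1 + ε)⁻¹ := by positivity
  have hεinv1 : (1 + ε)⁻¹ ≤ 1 := by
    rw [inv_le_one_iff₀]; right; linarith
  set a : ℝ := ((1 + ε)⁻¹) ^ ((m : ℝ)⁻¹) with ha'
  set b : ℝ := ((1 + ε)⁻¹) ^ ((n : ℝ)⁻¹) with hb'
  have ha : 0 < a := Real.rpow_pos_of_pos hainv _
  have hb : 0 < b := Real.rpow_pos_of_pos hainv _
  have ham : a ^ m = (1 + ε)⁻¹ := Real.rpow_inv_natCast_pow hainv.le (by omega)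
  have hbn : b ^ n = (1 + ε)⁻¹ := Real.rpow_inv_natCast_pow hainv.le (by omega)
  set f : ((Fin m → ℝ) × (Fin n → ℝ)) →ₗ[ℝ] ((Fin m → ℝ) × (Fin n → ℝ)) :=
    (a • LinearMap.id).prodMap (b • LinearMap.id) with hf
  have hdetabs : |LinearMap.det f| = (1 + ε)⁻¹ * (1 + ε)⁻¹ := by
    rw [hf, det_prodMap_pi, det_smul_id_pi, det_smul_id_pi, ham, hbn]
    exact abs_of_pos (by positivity)
  have hfapp : ∀ p : (Fin m → ℝ) × (Fin n → ℝ), f p = (a • p.1, b • p.2) := fun p => rfl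
  have hν₁a : ∀ x, ν₁ (a • x) ^ m = (1 + ε)⁻¹ * ν₁ x ^ m := fun x => by
    rw [hν₁smul, abs_of_pos ha, mul_pow, ham]
  have hν₂b : ∀ y, ν₂ (b • y) ^ n = (1 + ε)⁻¹ * ν₂ y ^ n := fun y => by
    rw [hν₂smul, abs_of_pos hb, mul_pow, hbn]
  have h32 : (1:ℝ) ≤ (1 + ε)⁻¹ * (3/2) := by
    have e1 : (1 + ε)⁻¹ * (1 + ε) = 1 := inv_mul_cancel₀ hε1.ne'
    have e2 : (1 + ε)⁻¹ * (1 + ε) ≤ (1 + ε)⁻¹ * (3/2) :=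
      mul_le_mul_of_nonneg_left (by linarith) hainv.le
    linarith
  -- finiteness of the various sets
  have hET_fin : volume (ESet m n ψ ν₁ ν₂ T) < ⊤ := by
    refine lt_of_le_of_lt (measure_mono ?_) (finbox (2 * ψ 1 + 1) T)
    rintro ⟨x, y⟩ ⟨h1, h2, h3⟩
    exact ⟨by have := hψle _ h2; linarith, h3⟩
  have hE'_fin : volume (Eprime m n ψ ν₁ ν₂ ε T) < ⊤ := by
    refine lt_of_le_of_lt (measure_mono ?_) (finbox (2 * ψ 1 + 1) (2 * T))
    rintro ⟨x, y⟩ ⟨h1, h2, h3⟩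
    have harg : (1:ℝ) ≤ (1 + ε)⁻¹ * ν₂ y ^ n :=
      le_trans h32 (mul_le_mul_of_nonneg_left h2 hainv.le)
    have hψb := hψle _ harg
    constructor
    · have : (1 + ε) * ψ ((1 + ε)⁻¹ * ν₂ y ^ n) ≤ (1 + ε) * ψ 1 :=
        mul_le_mul_of_nonneg_left hψb (by linarith)
      nlinarith
    · nlinarith
  have hEm_fin : volume (Eminus m n ψ ν₁ ν₂ ε T) < ⊤ := by
    refine lt_of_le_of_lt (measure_mono ?_) (finbox (2 * ψ 1 + 1) T)
    rintro ⟨x, y⟩ ⟨h1, h2, h3⟩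
    have harg : (1:ℝ) ≤ (1 + ε) * ν₂ y ^ n := by
      have h5 : 1 * ν₂ y ^ n ≤ (1 + ε) * ν₂ y ^ n :=
        mul_le_mul_of_nonneg_right (by linarith) (by linarith)
      linarith
    have hψb := hψle _ harg
    have hψnn : 0 < ψ ((1 + ε) * ν₂ y ^ n) := hψpos _ harg
    constructor
    · have h5 : (1 + ε)⁻¹ * ψ ((1 + ε) * ν₂ y ^ n) ≤ 1 * ψ ((1 + ε) * ν₂ y ^ n) :=
        mul_le_mul_of_nonneg_right hεinv1 hψnn.le
      linarith
    · have h5 : (1 + ε)⁻¹ * T ≤ 1 * T := mul_le_mul_of_nonneg_right hεinv1 (by linarith)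
      linarith
  -- Part 1 : the image f '' E' is contained in E_T
  have himg1 : f '' (Eprime m n ψ ν₁ ν₂ ε T) ⊆ ESet m n ψ ν₁ ν₂ T := by
    rintro q ⟨p, ⟨h1, h2, h3⟩, rfl⟩
    rw [hfapp]
    refine ⟨?_, ?_, ?_⟩
    · show ν₁ (a • p.1) ^ m < ψ (ν₂ (b • p.2) ^ n)
      rw [hν₁a, hν₂b]
      calc (1 + ε)⁻¹ * ν₁ p.1 ^ m
          < (1 + ε)⁻¹ * ((1 + ε) * ψ ((1 + ε)⁻¹ * ν₂ p.2 ^ n)) :=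
            mul_lt_mul_of_pos_left h1 hainv
        _ = ψ ((1 + ε)⁻¹ * ν₂ p.2 ^ n) := by
            rw [← mul_assoc, inv_mul_cancel₀ hε1.ne', one_mul]
    · show (1:ℝ) ≤ ν₂ (b • p.2) ^ n
      rw [hν₂b]
      exact le_trans h32 (mul_le_mul_of_nonneg_left h2 hainv.le)
    · show ν₂ (b • p.2) ^ n < T
      rw [hν₂b]
      calc (1 + ε)⁻¹ * ν₂ p.2 ^ n < (1 + ε)⁻¹ * ((1 + ε) * T) :=
            mul_lt_mul_of_pos_left h3 hainv
        _ = T := by rw [← mul_assoc, inv_mul_cancel₀ hε1.ne', one_mul]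
  have key1 : ENNReal.ofReal ((1 + ε)⁻¹ * (1 + ε)⁻¹) * volume (Eprime m n ψ ν₁ ν₂ ε T)
      ≤ volume (ESet m n ψ ν₁ ν₂ T) := by
    have h := Measure.addHaar_image_linearMap (μ := volume) f (Eprime m n ψ ν₁ ν₂ ε T)
    rw [hdetabs] at h
    rw [← h]
    exact measure_mono himg1
  have hre1 : ((1 + ε)⁻¹ * (1 + ε)⁻¹) * (volume (Eprime m n ψ ν₁ ν₂ ε T)).toReal
      ≤ (volume (ESet m n ψ ν₁ ν₂ T)).toReal := by
    have h := ENNReal.toReal_mono hET_fin.ne key1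
    rwa [ENNReal.toReal_mul, ENNReal.toReal_ofReal (by positivity)] at h
  have hid : (1 + ε) ^ 2 * ((1 + ε)⁻¹ * (1 + ε)⁻¹) = 1 := by
    field_simp
  have hre1' : (volume (Eprime m n ψ ν₁ ν₂ ε T)).toReal
      ≤ (1 + ε) ^ 2 * (volume (ESet m n ψ ν₁ ν₂ T)).toReal := by
    calc (volume (Eprime m n ψ ν₁ ν₂ ε T)).toReal
        = (1 + ε) ^ 2 * (((1 + ε)⁻¹ * (1 + ε)⁻¹) * (volume (Eprime m n ψ ν₁ ν₂ ε T)).toReal) := by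
          rw [← mul_assoc, hid, one_mul]
      _ ≤ (1 + ε) ^ 2 * (volume (ESet m n ψ ν₁ ν₂ T)).toReal :=
          mul_le_mul_of_nonneg_left hre1 (by positivity)
  have hC0subD : Czero m n ψ ν₁ ν₂ ⊆ D := by
    rintro ⟨x, y⟩ ⟨h1, h2, h3⟩
    exact ⟨by linarith, by linarith⟩
  have hEp : volume (Eplus m n ψ ν₁ ν₂ ε T)
      ≤ volume (Eprime m n ψ ν₁ ν₂ ε T) + volume D :=
    le_trans (measure_union_le _ _) (add_le_add le_rfl (measure_mono hC0subD))
  have part1 : (volume (Eplus m n ψ ν₁ ν₂ ε T)).toReal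
      ≤ (1 + ε) ^ 2 * (volume (ESet m n ψ ν₁ ν₂ T)).toReal + C := by
    have hfin : volume (Eprime m n ψ ν₁ ν₂ ε T) + volume D ≠ ⊤ :=
      ENNReal.add_ne_top.mpr ⟨hE'_fin.ne, hDfin.ne⟩
    have h := ENNReal.toReal_mono hfin hEp
    rw [ENNReal.toReal_add hE'_fin.ne hDfin.ne] at h
    rw [hC]
    linarith
  -- Part 2
  set A : Set ((Fin m → ℝ) × (Fin n → ℝ)) :=
    {p | p ∈ ESet m n ψ ν₁ ν₂ T ∧ 3/2 * (1 + ε) ≤ ν₂ p.2 ^ n} with hA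
  have himg2 : f '' A ⊆ Eminus m n ψ ν₁ ν₂ ε T := by
    rintro q ⟨p, ⟨⟨h1, h2, h3⟩, h4⟩, rfl⟩
    rw [hfapp]
    refine ⟨?_, ?_, ?_⟩
    · show ν₁ (a • p.1) ^ m < (1 + ε)⁻¹ * ψ ((1 + ε) * ν₂ (b • p.2) ^ n)
      rw [hν₁a, hν₂b, ← mul_assoc, mul_inv_cancel₀ hε1.ne', one_mul]
      exact mul_lt_mul_of_pos_left h1 hainv
    · show (3:ℝ)/2 ≤ ν₂ (b • p.2) ^ n
      rw [hν₂b]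
      have := mul_le_mul_of_nonneg_left h4 hainv.le
      calc (3:ℝ)/2 = (1 + ε)⁻¹ * (3/2 * (1 + ε)) := by field_simp
        _ ≤ (1 + ε)⁻¹ * ν₂ p.2 ^ n := this
    · show ν₂ (b • p.2) ^ n < (1 + ε)⁻¹ * T
      rw [hν₂b]
      exact mul_lt_mul_of_pos_left h3 hainv
  have key2 : ENNReal.ofReal ((1 + ε)⁻¹ * (1 + ε)⁻¹) * volume A
      ≤ volume (Eminus m n ψ ν₁ ν₂ ε T) := by
    have h := Measure.addHaar_image_linearMap (μ := volume) f A
    rw [hdetabs] at h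
    rw [← h]
    exact measure_mono himg2
  have hAfin : volume A < ⊤ :=
    lt_of_le_of_lt (measure_mono (fun p hp => hp.1)) hET_fin
  have hre2 : ((1 + ε)⁻¹ * (1 + ε)⁻¹) * (volume A).toReal
      ≤ (volume (Eminus m n ψ ν₁ ν₂ ε T)).toReal := by
    have h := ENNReal.toReal_mono hEm_fin.ne key2
    rwa [ENNReal.toReal_mul, ENNReal.toReal_ofReal (by positivity)] at h
  have hcover : ESet m n ψ ν₁ ν₂ T ⊆ A ∪ D := by
    rintro ⟨x, y⟩ hp
    by_cases hcase : 3/2 * (1 + ε) ≤ ν₂ y ^ n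
    · exact Or.inl ⟨hp, hcase⟩
    · push_neg at hcase
      obtain ⟨h1, h2, h3⟩ := hp
      have := hψle _ h2
      exact Or.inr ⟨by linarith, by linarith⟩
  have hVle : (volume (ESet m n ψ ν₁ ν₂ T)).toReal
      ≤ (volume A).toReal + (volume D).toReal := by
    have hfin : volume A + volume D ≠ ⊤ := ENNReal.add_ne_top.mpr ⟨hAfin.ne, hDfin.ne⟩
    have h := ENNReal.toReal_mono hfin
      (le_trans (measure_mono hcover) (measure_union_le _ _))
    rwa [ENNReal.toReal_add hAfin.ne hDfin.ne] at h
  have part2 : ((1 + ε) ^ 2)⁻¹ * (volume (ESet m n ψ ν₁ ν₂ T)).toReal - C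
      ≤ (volume (Eminus m n ψ ν₁ ν₂ ε T)).toReal := by
    have hc1 : (1 + ε)⁻¹ * (1 + ε)⁻¹ = ((1 + ε) ^ 2)⁻¹ := by
      rw [pow_two, mul_inv]
    have hcpos : (0:ℝ) < ((1 + ε) ^ 2)⁻¹ := by positivity
    have hcle : ((1 + ε) ^ 2)⁻¹ ≤ 1 := by
      rw [inv_le_one_iff₀]; right; nlinarith
    rw [hc1] at hre2
    have hd0 : 0 ≤ (volume D).toReal := ENNReal.toReal_nonneg
    have hmul := mul_le_mul_of_nonneg_left hVle hcpos.le
    have hdd : ((1 + ε) ^ 2)⁻¹ * (volume D).toReal ≤ (volume D).toReal := by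
      nlinarith
    rw [hC]
    nlinarith
  exact ⟨part1, part2⟩
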